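/- Let G be a d-degenerate graph on n vertices and ε > 0. The iterative procedure that repeatedly removes ⌈nε/(2+ε)⌉ vertices of smallest degree from the current graph (where n is the current number of vertices) and appends them to a list L produces an ordering of the vertices of G such that every vertex has at most (2+ε)d neighbors appearing later in L; that is, L is a (2+ε)d-degeneracy ordering of G. -/

import Mathlib

/-- A graph `G` is `d`-degenerate if every nonempty (induced) subgraph of `G`
contains a vertex of degree at most `d`. -/
def Degenerate {V : Type*} [Fintype V] [DecidableEq V] (G : SimpleGraph V)
    [DecidableRel G.Adj] (d : ℕ) : Prop :=
  ∀ s : Finset V, s.Nonempty → ∃ v ∈ s, (s.filter (fun w => G.Adj v w)).card ≤ d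

lemma sum_deg_le {V : Type*} [Fintype V] [DecidableEq V] (G : SimpleGraph V)
    [DecidableRel G.Adj] (d : ℕ)
    (hG : ∀ s : Finset V, s.Nonempty → ∃ v ∈ s, (s.filter (fun w => G.Adj v w)).card ≤ d) :
    ∀ s : Finset V, ∑ u ∈ s, (s.filter (fun w => G.Adj u w)).card ≤ 2 * d * s.card := by
  intro s
  induction s using Finset.strongInduction with
  | _ s ih =>
    rcases s.eq_empty_or_nonempty with rfl | hne
    · simp
    obtain ⟨v, hv, hvd⟩ := hG s hne
    set t := s.erase v with ht
    have hts : t ⊂ s := Finset.erase_ssubset hv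
    have ihe := ih t hts
    have hins : s = insert v t := (Finset.insert_erase hv).symm
    have hvt : v ∉ t := Finset.notMem_erase v s
    have hpt : ∀ u : V, (s.filter (fun w => G.Adj u w)).card
        = (t.filter (fun w => G.Adj u w)).card + (if G.Adj u v then 1 else 0) := by
      intro u
      rw [hins, Finset.filter_insert]
      split_ifs with h
      · rw [Finset.card_insert_of_notMem (by simp [hvt])]
      · simp
    have hdv : (s.filter (fun w => G.Adj v w)).card = (t.filter (fun w => G.Adj v w)).card := by
      rw [hins, Finset.filter_insert, if_neg (G.loopless.irrefl v)]
    have hsum : ∑ u ∈ s, (s.filter (fun w => G.Adj u w)).card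
        = (s.filter (fun w => G.Adj v w)).card + ∑ u ∈ t, (s.filter (fun w => G.Adj u w)).card := by
      rw [hins, Finset.sum_insert hvt]
    have hsum2 : ∑ u ∈ t, (s.filter (fun w => G.Adj u w)).card
        = ∑ u ∈ t, (t.filter (fun w => G.Adj u w)).card
          + (t.filter (fun u => G.Adj u v)).card := by
      rw [Finset.sum_congr rfl (fun u _ => hpt u), Finset.sum_add_distrib]
      congr 1
      rw [Finset.card_filter]
    have hcomm : (t.filter (fun u => G.Adj u v)).card = (t.filter (fun w => G.Adj v w)).card := by
      congr 1
      apply Finset.filter_congr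
      intro x _
      simp [G.adj_comm]
    have hcs : s.card = t.card + 1 := by
      rw [hins, Finset.card_insert_of_notMem hvt]
    have hdvd : (t.filter (fun w => G.Adj v w)).card ≤ d := hdv ▸ hvd
    calc ∑ u ∈ s, (s.filter (fun w => G.Adj u w)).card
        = ∑ u ∈ t, (t.filter (fun w => G.Adj u w)).card
          + 2 * (t.filter (fun w => G.Adj v w)).card := by
          rw [hsum, hsum2, hdv, hcomm]; ring
      _ ≤ 2 * d * t.card + 2 * d := by omega
      _ = 2 * d * s.card := by rw [hcs]; ring


/-- The iterative procedure that repeatedly removes `⌈nε/(2+ε)⌉` vertices of smallest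
degree from the current graph (where `n` is the current number of vertices) and appends
them to a list produces a `(2+ε)d`-degeneracy ordering of `G`: every vertex has at most
`(2+ε)d` neighbors appearing at its own stage or later (in particular, at most `(2+ε)d`
neighbors later in the produced list `L`).

The procedure is encoded by the sequence `s i` of remaining vertex sets and the blocks
`S i` of removed vertices; `ord v` is the index of the block in which `v` is removed,
so `v` precedes `w` in `L` whenever `ord v < ord w`. -/
theorem approx_degeneracy_ordering {V : Type*} [Fintype V] [DecidableEq V]
    (G : SimpleGraph V) [DecidableRel G.Adj] (d : ℕ) (hG : Degenerate G d)
    (ε : ℝ) (hε : 0 < ε)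
    (s S : ℕ → Finset V) (ord : V → ℕ)
    (hs0 : s 0 = Finset.univ)
    (hstep : ∀ i, s (i + 1) = s i \ S i)
    (hSsub : ∀ i, S i ⊆ s i)
    (hScard : ∀ i, (S i).card = ⌈((s i).card : ℝ) * ε / (2 + ε)⌉₊)
    (hSmall : ∀ i, ∀ v ∈ S i, ∀ u ∈ s i \ S i,
      ((s i).filter (fun w => G.Adj v w)).card ≤ ((s i).filter (fun w => G.Adj u w)).card)
    (hord : ∀ v, v ∈ S (ord v)) :
    ∀ v : V,
      ((Finset.univ.filter (fun w => G.Adj v w ∧ ord v ≤ ord w)).card : ℝ)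
        ≤ (2 + ε) * d := by
  -- s is antitone
  have hmono : ∀ i j, i ≤ j → s j ⊆ s i := by
    intro i j hij
    induction j with
    | zero => simp_all
    | succ j ihj =>
      rcases Nat.lt_or_ge i (j+1) with h | h
      · have : s (j+1) ⊆ s j := by rw [hstep]; exact Finset.sdiff_subset
        exact this.trans (ihj (Nat.lt_succ_iff.mp h))
      · have : i = j + 1 := le_antisymm hij h
        subst this; rfl
  intro v
  set i := ord v with hi
  have hvS : v ∈ S i := hord v
  have hvs : v ∈ s i := hSsub i hvS
  set n := (s i).card with hn
  set k := (S i).card with hk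
  have hkn : k ≤ n := Finset.card_le_card (hSsub i)
  set deg := ((s i).filter (fun w => G.Adj v w)).card with hdeg
  -- Step A: the filtered set is contained in (s i).filter (Adj v)
  have hA : (Finset.univ.filter (fun w => G.Adj v w ∧ ord v ≤ ord w)).card ≤ deg := by
    apply Finset.card_le_card
    intro w hw
    simp only [Finset.mem_filter, Finset.mem_univ, true_and] at hw ⊢
    exact ⟨hmono i (ord w) hw.2 (hSsub _ (hord w)), hw.1⟩
  -- Step B: (n - k + 1) * deg ≤ sum of degrees over s i
  have hvnot : v ∉ s i \ S i := by simp [hvS]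
  set T := insert v (s i \ S i) with hT
  have hTcard : T.card = (n - k) + 1 := by
    rw [hT, Finset.card_insert_of_notMem hvnot, Finset.card_sdiff_of_subset (hSsub i)]
  have hTsub : T ⊆ s i := by
    rw [hT]
    intro x hx
    rcases Finset.mem_insert.mp hx with rfl | hx
    · exact hvs
    · exact (Finset.mem_sdiff.mp hx).1
  have hB : T.card * deg ≤ ∑ u ∈ T, ((s i).filter (fun w => G.Adj u w)).card := by
    have hle : ∀ u ∈ T, deg ≤ ((s i).filter (fun w => G.Adj u w)).card := by
      intro u hu
      rcases Finset.mem_insert.mp hu with rfl | hu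
      · exact le_rfl
      · exact hSmall i _ hvS u hu
    have h := Finset.card_nsmul_le_sum T (fun u => ((s i).filter (fun w => G.Adj u w)).card) deg hle
    simpa [smul_eq_mul] using h
  have hC : ∑ u ∈ T, ((s i).filter (fun w => G.Adj u w)).card
      ≤ ∑ u ∈ s i, ((s i).filter (fun w => G.Adj u w)).card :=
    Finset.sum_le_sum_of_subset hTsub
  have hD : ∑ u ∈ s i, ((s i).filter (fun w => G.Adj u w)).card ≤ 2 * d * n :=
    sum_deg_le G d hG (s i)
  have hkey : ((n - k) + 1) * deg ≤ 2 * d * n := by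
    rw [← hTcard]; exact hB.trans (hC.trans hD)
  -- Step E: cast and arithmetic
  have h2ε : (0:ℝ) < 2 + ε := by linarith
  have hkR : (k:ℝ) ≤ (n:ℝ) * ε / (2 + ε) + 1 := by
    have hx : (0:ℝ) ≤ (n:ℝ) * ε / (2 + ε) := by positivity
    have := Nat.ceil_lt_add_one hx
    rw [hk, hScard i, ← hn]
    exact le_of_lt (by exact_mod_cast this.trans_le (le_refl _))
  have hm : (((n - k) + 1 : ℕ) : ℝ) = (n:ℝ) - (k:ℝ) + 1 := by
    push_cast [hkn]; ring
  set m : ℝ := (n:ℝ) - (k:ℝ) + 1 with hmdef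
  have hm1 : (1:ℝ) ≤ m := by
    have : (k:ℝ) ≤ (n:ℝ) := by exact_mod_cast hkn
    simp only [hmdef]; linarith
  have hkeyR : m * (deg:ℝ) ≤ 2 * d * n := by
    have := hkey
    have h := (Nat.cast_le (α := ℝ)).mpr hkey
    push_cast at h
    rw [hm] at *
    calc m * (deg:ℝ) = ((n:ℝ) - k + 1) * deg := by rw [hmdef]
      _ ≤ 2 * d * n := by
          have hc : (((n-k:ℕ):ℝ) + 1) * (deg:ℝ) ≤ 2 * (d:ℝ) * n := by exact_mod_cast hkey
          rwa [Nat.cast_sub hkn] at hc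
  have h2n : 2 * (n:ℝ) ≤ (2 + ε) * m := by
    have : (2 + ε) * (k:ℝ) ≤ (n:ℝ) * ε + (2 + ε) := by
      have := mul_le_mul_of_nonneg_left hkR (le_of_lt h2ε)
      calc (2 + ε) * (k:ℝ) ≤ (2 + ε) * ((n:ℝ) * ε / (2 + ε) + 1) := this
        _ = (n:ℝ) * ε + (2 + ε) := by field_simp
    simp only [hmdef]; nlinarith
  have hA' : ((Finset.univ.filter (fun w => G.Adj v w ∧ ord v ≤ ord w)).card : ℝ) ≤ (deg:ℝ) := by
    exact_mod_cast hA
  have hdnn : (0:ℝ) ≤ (d:ℝ) := Nat.cast_nonneg d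
  have hdegnn : (0:ℝ) ≤ (deg:ℝ) := Nat.cast_nonneg deg
  have hfinal : (deg:ℝ) ≤ (2 + ε) * d := by
    nlinarith [mul_le_mul_of_nonneg_left h2n hdnn, hkeyR, hm1, hdegnn]
  linarith
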